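/- Let Σ be a symmetric positive semidefinite matrix partitioned as Σ = [[Σ_xx, Σ_xu],[Σ_ux, Σ_uu]] with Σ_xx ∈ ℝ^{d_x×d_x} positive definite, and suppose Σ_xx ⪰ (A B) Σ (A B)^⊤ + σ_w² I for some σ_w > 0, where (A B) is the horizontal concatenation of A ∈ ℝ^{d_x×d_x} and B ∈ ℝ^{d_x×d_u}. Then the controller K = Σ_ux Σ_xx^{-1} satisfies ρ(A + BK) < 1, i.e., every eigenvalue of A + BK has absolute value strictly less than 1. -/

import Mathlib

open Matrix
open scoped ComplexOrder

lemma psd_map_ofReal {n : Type*} [Fintype n] [DecidableEq n] {M : Matrix n n ℝ}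
    (h : M.PosSemidef) : (M.map Complex.ofReal).PosSemidef := by
  obtain ⟨B, hB⟩ : ∃ B : Matrix n n ℝ, M = Bᴴ * B := by
    open scoped MatrixOrder in exact CStarAlgebra.nonneg_iff_eq_star_mul_self.mp h.nonneg
  have h2 : M.map Complex.ofReal = (B.map Complex.ofReal)ᴴ * (B.map Complex.ofReal) := by
    subst hB
    ext i j
    simp [Matrix.mul_apply, Matrix.conjTranspose_apply, Complex.ofReal_sum]
  rw [h2]
  exact Matrix.posSemidef_conjTranspose_mul_self _

lemma map_mul_ofReal {l m n : Type*} [Fintype m] (X : Matrix l m ℝ) (Y : Matrix m n ℝ) :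
    (X * Y).map Complex.ofReal = X.map Complex.ofReal * Y.map Complex.ofReal := by
  ext i j
  simp [Matrix.mul_apply, Complex.ofReal_sum]

set_option maxHeartbeats 1600000 in
/-- if `Σ ⪰ 0` with positive definite block `Σ_xx` satisfies the
Lyapunov-type inequality `Σ_xx ⪰ (A B) Σ (A B)ᵀ + σ_w² I`, then `K = Σ_ux Σ_xx⁻¹`
stabilizes `(A, B)`: every complex eigenvalue of `A + B K` has modulus `< 1`. -/
theorem controller_stabilizes (dx du : ℕ)
    (Sxx : Matrix (Fin dx) (Fin dx) ℝ) (Sxu : Matrix (Fin dx) (Fin du) ℝ)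
    (Sux : Matrix (Fin du) (Fin dx) ℝ) (Suu : Matrix (Fin du) (Fin du) ℝ)
    (hpsd : (Matrix.fromBlocks Sxx Sxu Sux Suu).PosSemidef)
    (hxx : Sxx.PosDef)
    (hsym : Sxu = Suxᵀ)
    (A : Matrix (Fin dx) (Fin dx) ℝ) (B : Matrix (Fin dx) (Fin du) ℝ)
    (σw : ℝ) (hσw : 0 < σw)
    (hcon : (Sxx -
      (Matrix.fromCols A B * Matrix.fromBlocks Sxx Sxu Sux Suu *
        (Matrix.fromCols A B)ᵀ + σw ^ 2 • (1 : Matrix (Fin dx) (Fin dx) ℝ))).PosSemidef)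
    (K : Matrix (Fin du) (Fin dx) ℝ) (hK : K = Sux * Sxx⁻¹) :
    ∀ μ ∈ spectrum ℂ ((A + B * K).map Complex.ofReal), ‖μ‖ < 1 := by
  subst hK
  set L : Matrix (Fin dx) (Fin dx) ℝ := A + B * (Sux * Sxx⁻¹) with hL
  set E : Matrix (Fin dx) (Fin dx ⊕ Fin du) ℝ := Matrix.fromCols A B with hE
  set Sb : Matrix (Fin dx ⊕ Fin du) (Fin dx ⊕ Fin du) ℝ :=
    Matrix.fromBlocks Sxx Sxu Sux Suu with hSb
  -- basic facts about Sxx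
  have hu : IsUnit Sxx.det := isUnit_iff_ne_zero.mpr (ne_of_gt hxx.det_pos)
  have hinv1 : Sxx * Sxx⁻¹ = 1 := Matrix.mul_nonsing_inv _ hu
  have hinv2 : Sxx⁻¹ * Sxx = 1 := Matrix.nonsing_inv_mul _ hu
  have hSsym : Sxxᵀ = Sxx := by
    simpa [Matrix.conjTranspose_eq_transpose_of_trivial] using hxx.1.eq
  -- Schur complement is PSD
  haveI : Invertible Sxx := Sxx.invertibleOfIsUnitDet hu
  have hSchur : (Suu - Sux * Sxx⁻¹ * Sxu).PosSemidef := by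
    have hsux : Sux = Sxuᴴ := by
      rw [hsym, Matrix.conjTranspose_eq_transpose_of_trivial, Matrix.transpose_transpose]
    have hps : (Matrix.fromBlocks Sxx Sxu Sxuᴴ Suu).PosSemidef := by rw [← hsux]; exact hpsd
    have := (Matrix.PosDef.fromBlocks₁₁ Sxu Suu hxx).mp hps
    rwa [← hsux] at this
  -- the middle matrix
  set N : Matrix (Fin dx ⊕ Fin du) (Fin dx) ℝ := Matrix.fromRows Sxx Sux with hN
  set Ct : Matrix (Fin dx) (Fin dx ⊕ Fin du) ℝ := Matrix.fromCols Sxx Sxu with hCt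
  have hkey : Sb - N * Sxx⁻¹ * Ct
      = Matrix.fromBlocks 0 0 0 (Suu - Sux * Sxx⁻¹ * Sxu) := by
    rw [hN, hCt, hSb, Matrix.fromRows_mul, Matrix.fromRows_mul_fromCols]
    have e1 : Sxx * Sxx⁻¹ * Sxx = Sxx := by rw [hinv1, one_mul]
    have e2 : Sxx * Sxx⁻¹ * Sxu = Sxu := by rw [hinv1, Matrix.one_mul]
    have e3 : Sux * Sxx⁻¹ * Sxx = Sux := by rw [Matrix.mul_assoc, hinv2, Matrix.mul_one]
    rw [e1, e2, e3]
    ext (i | i) (j | j) <;>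
      simp [Matrix.fromBlocks, Matrix.sub_apply]
  have hMid : (Sb - N * Sxx⁻¹ * Ct).PosSemidef := by
    rw [hkey]
    set S := Suu - Sux * Sxx⁻¹ * Sxu with hS
    set J : Matrix (Fin dx ⊕ Fin du) (Fin du) ℝ :=
      Matrix.fromRows (0 : Matrix (Fin dx) (Fin du) ℝ) (1 : Matrix (Fin du) (Fin du) ℝ) with hJ
    have hJm : J * S * Jᴴ = Matrix.fromBlocks 0 0 0 S := by
      rw [hJ, Matrix.conjTranspose_eq_transpose_of_trivial, Matrix.transpose_fromRows,
        Matrix.fromRows_mul, Matrix.fromRows_mul_fromCols]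
      simp
    rw [← hJm]
    exact hSchur.mul_mul_conjTranspose_same _
  -- E * N = L * Sxx
  have hEN : E * N = L * Sxx := by
    rw [hE, hN, Matrix.fromCols_mul_fromRows, hL, add_mul]
    congr 1
    rw [Matrix.mul_assoc, Matrix.mul_assoc, hinv2, Matrix.mul_one]
  have hCtE : Ct * Eᵀ = (E * N)ᵀ := by
    rw [Matrix.transpose_mul, hN, Matrix.transpose_fromRows, hSsym, ← hsym, hCt]
  -- key identity
  have hId : E * (N * Sxx⁻¹ * Ct) * Eᵀ = L * Sxx * Lᵀ := by
    calc E * (N * Sxx⁻¹ * Ct) * Eᵀ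
        = (E * N) * Sxx⁻¹ * (Ct * Eᵀ) := by simp only [Matrix.mul_assoc]
      _ = (L * Sxx) * Sxx⁻¹ * (L * Sxx)ᵀ := by rw [hCtE, hEN]
      _ = L * Sxx * Lᵀ := by
          rw [Matrix.transpose_mul, hSsym]
          calc L * Sxx * Sxx⁻¹ * (Sxx * Lᵀ)
              = L * ((Sxx * Sxx⁻¹) * (Sxx * Lᵀ)) := by simp only [Matrix.mul_assoc]
            _ = L * (Sxx * Lᵀ) := by rw [hinv1, one_mul]
            _ = L * Sxx * Lᵀ := by rw [Matrix.mul_assoc]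
  have hG : (E * Sb * Eᵀ - L * Sxx * Lᵀ).PosSemidef := by
    have : E * Sb * Eᵀ - L * Sxx * Lᵀ = E * (Sb - N * Sxx⁻¹ * Ct) * Eᴴ := by
      rw [Matrix.conjTranspose_eq_transpose_of_trivial, Matrix.mul_sub, Matrix.sub_mul, hId]
    rw [this]
    exact hMid.mul_mul_conjTranspose_same E
  -- Lyapunov inequality over ℝ
  have hQ : (Sxx - (L * Sxx * Lᵀ + σw ^ 2 • (1 : Matrix (Fin dx) (Fin dx) ℝ))).PosSemidef := by
    have hsum := hcon.add hG
    have : Sxx - (E * Sb * Eᵀ + σw ^ 2 • (1 : Matrix (Fin dx) (Fin dx) ℝ))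
        + (E * Sb * Eᵀ - L * Sxx * Lᵀ)
        = Sxx - (L * Sxx * Lᵀ + σw ^ 2 • (1 : Matrix (Fin dx) (Fin dx) ℝ)) := by
      abel
    rwa [this] at hsum
  -- complexify
  set P : Matrix (Fin dx) (Fin dx) ℂ := Sxx.map Complex.ofReal with hP
  set Lc : Matrix (Fin dx) (Fin dx) ℂ := L.map Complex.ofReal with hLc
  have hLcH : Lcᴴ = Lᵀ.map Complex.ofReal := by
    ext i j
    simp [hLc, Matrix.conjTranspose_apply]
  have hQc : (P - (Lc * P * Lcᴴ + ((σw : ℂ) ^ 2) • (1 : Matrix (Fin dx) (Fin dx) ℂ))).PosSemidef := by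
    have hid : (Sxx - (L * Sxx * Lᵀ + σw ^ 2 • (1 : Matrix (Fin dx) (Fin dx) ℝ))).map Complex.ofReal
        = P - (Lc * P * Lcᴴ + ((σw : ℂ) ^ 2) • (1 : Matrix (Fin dx) (Fin dx) ℂ)) := by
      rw [hLcH, hP, hLc, ← map_mul_ofReal, ← map_mul_ofReal]
      ext i j
      by_cases h : i = j <;>
        simp [Matrix.sub_apply, Matrix.add_apply, Matrix.smul_apply, Matrix.one_apply, h]
    rw [← hid]
    exact psd_map_ofReal hQ
  -- eigenvalue argument
  intro μ hμ
  have h1 : ¬ IsUnit (μ • (1 : Matrix (Fin dx) (Fin dx) ℂ) - Lc) := by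
    rw [spectrum.mem_iff] at hμ
    simpa [Algebra.algebraMap_eq_smul_one] using hμ
  have h2 : (μ • (1 : Matrix (Fin dx) (Fin dx) ℂ) - Lc).det = 0 := by
    by_contra h
    exact h1 ((Matrix.isUnit_iff_isUnit_det _).mpr (isUnit_iff_ne_zero.mpr h))
  have h3 : ((starRingEnd ℂ μ) • (1 : Matrix (Fin dx) (Fin dx) ℂ) - Lcᴴ).det = 0 := by
    have : (starRingEnd ℂ μ) • (1 : Matrix (Fin dx) (Fin dx) ℂ) - Lcᴴ
        = (μ • (1 : Matrix (Fin dx) (Fin dx) ℂ) - Lc)ᴴ := by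
      rw [Matrix.conjTranspose_sub, Matrix.conjTranspose_smul, Matrix.conjTranspose_one]
      rfl
    rw [this, Matrix.det_conjTranspose, h2, star_zero]
  obtain ⟨v, hv0, hv⟩ := (Matrix.exists_mulVec_eq_zero_iff).mpr h3
  have hev : Lcᴴ *ᵥ v = (starRingEnd ℂ μ) • v := by
    rw [Matrix.sub_mulVec, Matrix.smul_mulVec, Matrix.one_mulVec, sub_eq_zero] at hv
    exact hv.symm
  have key : ∀ w : Fin dx → ℂ, star v ⬝ᵥ (Lc *ᵥ w) = μ * (star v ⬝ᵥ w) := by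
    intro w
    have h4 : star v ᵥ* Lc = star (Lcᴴ *ᵥ v) := by
      rw [Matrix.star_mulVec, Matrix.conjTranspose_conjTranspose]
    rw [Matrix.dotProduct_mulVec, h4, hev, star_smul, smul_dotProduct]
    simp [smul_eq_mul]
  set p : ℂ := star v ⬝ᵥ (P *ᵥ v) with hpdef
  set c : ℂ := star v ⬝ᵥ v with hcdef
  have hpc : star v ⬝ᵥ ((Lc * P * Lcᴴ) *ᵥ v) = μ * starRingEnd ℂ μ * p := by
    have ha : Lc * P * Lcᴴ = Lc * (P * Lcᴴ) := by rw [Matrix.mul_assoc]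
    rw [ha, ← Matrix.mulVec_mulVec, key, ← Matrix.mulVec_mulVec, hev, Matrix.mulVec_smul,
      dotProduct_smul, smul_eq_mul, ← hpdef]
    ring
  have hq := hQc.dotProduct_mulVec_nonneg v
  have expand : (P - (Lc * P * Lcᴴ + ((σw : ℂ) ^ 2) • (1 : Matrix (Fin dx) (Fin dx) ℂ))) *ᵥ v
      = P *ᵥ v - ((Lc * P * Lcᴴ) *ᵥ v + ((σw : ℂ) ^ 2) • v) := by
    rw [Matrix.sub_mulVec, Matrix.add_mulVec, Matrix.smul_mulVec, Matrix.one_mulVec]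
  rw [expand, dotProduct_sub, dotProduct_add, dotProduct_smul, hpc] at hq
  -- extract real parts
  have hp0 : 0 ≤ p := (psd_map_ofReal hxx.posSemidef).dotProduct_mulVec_nonneg v
  have hc0 : 0 < c := Matrix.dotProduct_star_self_pos_iff.mpr hv0
  have hμconj : μ * starRingEnd ℂ μ = ((‖μ‖ ^ 2 : ℝ) : ℂ) := by
    rw [Complex.mul_conj]
    norm_cast
    rw [Complex.normSq_eq_norm_sq]
  have hpre : (0 : ℝ) ≤ p.re := by
    rw [Complex.le_def] at hp0
    simpa using hp0.1
  have hcre : (0 : ℝ) < c.re := by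
    rw [Complex.lt_def] at hc0
    simpa using hc0.1
  have hre : (0 : ℝ) ≤ p.re - ‖μ‖ ^ 2 * p.re - σw ^ 2 * c.re := by
    rw [hμconj, smul_eq_mul, ← Complex.ofReal_pow, Complex.le_def] at hq
    have h5 := hq.1
    simp only [Complex.zero_re, Complex.sub_re, Complex.add_re, Complex.re_ofReal_mul] at h5
    linarith
  by_contra h
  push_neg at h
  have h1le : (1 : ℝ) ≤ ‖μ‖ := h
  have hfac : 0 ≤ (‖μ‖ ^ 2 - 1) * p.re := by
    apply mul_nonneg _ hpre
    nlinarith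
  nlinarith [mul_pos (mul_pos hσw hσw) hcre]
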